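/- arXiv:1005.4382 — 2 statements merged into one kernel-verified Lean document; each statement's English description precedes it below -/
import Mathlib

section
/- Let ψ : D_r ⊂ ℝ^m → ℝ^n be a C² function on the disc of radius r, and let II denote the second fundamental form of the graph of ψ with components h_{ijα} = ∂²ψ_α/∂x_i∂x_j, with norm |II|²_g = h_{ijα} h_{klβ} g^{αβ} g^{ik} g^{jl} taken in the induced metrics g_{ij} = δ_{ij} + D_iψ·D_jψ and g_{αβ} = δ_{αβ} + Dψ_α·Dψ_β. Then |D²ψ|² ≤ (1 + |Dψ|²)³ |II|²_g, where |D²ψ|² = Σ_{α,i,j} (∂²ψ_α/∂x_i∂x_j)². -/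
open Finset Matrix

section Aux

/-- Rotate three nested sums. -/
private lemma sum3_rot {a b c : Type*} [Fintype a] [Fintype b] [Fintype c]
    (F : a → b → c → ℝ) :
    (∑ x, ∑ y, ∑ z, F x y z) = ∑ z, ∑ x, ∑ y, F x y z := by
  rw [show (∑ x, ∑ y, ∑ z, F x y z) = ∑ x, ∑ z, ∑ y, F x y z from
    Finset.sum_congr rfl fun x _ => Finset.sum_comm]
  exact Finset.sum_comm

private lemma sqexp {m n : ℕ} (g : Fin m → Fin m → Fin n → ℝ) :
    (∑ i, ∑ j, ∑ α, g i j α)^2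
      = ∑ i, ∑ j, ∑ α, ∑ k, ∑ l, ∑ β, g k l β * g i j α := by
  rw [sq]; simp only [Finset.sum_mul, Finset.mul_sum]

private lemma factor3 {a b c : Type*} [Fintype a] [Fintype b] [Fintype c]
    (f f' : a → ℝ) (g g' : b → ℝ) (e e' : c → ℝ) (A B : ℝ) :
    A * B * (∑ u, e u * e' u) * (∑ s, f s * f' s) * (∑ t, g t * g' t)
    = ∑ s, ∑ t, ∑ u, (f s * g t * e u * A) * (f' s * g' t * e' u * B) := by
  simp only [Finset.sum_mul, Finset.mul_sum]
  rw [Finset.sum_comm]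
  exact sum_congr rfl fun s _ => sum_congr rfl fun t _ => sum_congr rfl fun u _ => by ring

private lemma ctmul_apply {a b : Type*} [Fintype a] (X : Matrix a b ℝ) (i k : b) :
    (Xᴴ * X) i k = ∑ s, X s i * X s k := by
  simp [Matrix.mul_apply, Matrix.conjTranspose_apply]

/-- The sixfold contraction appearing in `sffNormSq`, as a function of the three kernels. -/
private noncomputable def Gq {m n : ℕ} (h : Fin m → Fin m → Fin n → ℝ)
    (M₁ M₂ : Matrix (Fin m) (Fin m) ℝ) (N : Matrix (Fin n) (Fin n) ℝ) : ℝ :=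
  ∑ i, ∑ j, ∑ k, ∑ l, ∑ α, ∑ β,
    h i j α * h k l β * N α β * M₁ i k * M₂ j l

private lemma Gq_one {m n : ℕ} (h : Fin m → Fin m → Fin n → ℝ) :
    Gq h 1 1 1 = ∑ i, ∑ j, ∑ α, (h i j α)^2 := by
  unfold Gq
  simp [Matrix.one_apply, Finset.sum_ite_eq, Finset.sum_ite_eq', sq]

private lemma Gq_decomp {m n : ℕ} (h : Fin m → Fin m → Fin n → ℝ)
    (M : Matrix (Fin m) (Fin m) ℝ) (N : Matrix (Fin n) (Fin n) ℝ) (c : ℝ) :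
    Gq h M M N = Gq h (M - c • 1) M N + c * Gq h 1 (M - c • 1) N
      + c^2 * Gq h 1 1 (N - c • 1) + c^3 * Gq h 1 1 1 := by
  unfold Gq
  simp only [Finset.mul_sum, ← Finset.sum_add_distrib]
  refine sum_congr rfl fun i _ => sum_congr rfl fun j _ => sum_congr rfl fun k _ =>
    sum_congr rfl fun l _ => sum_congr rfl fun α _ => sum_congr rfl fun β _ => ?_
  simp only [Matrix.sub_apply, Matrix.smul_apply, smul_eq_mul]
  ring

private lemma gram_expand {m n : ℕ} (h : Fin m → Fin m → Fin n → ℝ)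
    (X Y : Matrix (Fin m) (Fin m) ℝ) (Z : Matrix (Fin n) (Fin n) ℝ) :
    Gq h (Xᴴ * X) (Yᴴ * Y) (Zᴴ * Z)
      = ∑ s, ∑ t, ∑ u, (∑ i, ∑ j, ∑ α, X s i * Y t j * Z u α * h i j α)^2 := by
  have per : ∀ i j k l α β,
      h i j α * h k l β * (Zᴴ * Z) α β * (Xᴴ * X) i k * (Yᴴ * Y) j l
      = ∑ s, ∑ t, ∑ u, (X s k * Y t l * Z u β * h k l β) *
          (X s i * Y t j * Z u α * h i j α) := by
    intro i j k l α β
    rw [ctmul_apply, ctmul_apply, ctmul_apply]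
    rw [show (∑ s, X s i * X s k) = ∑ s, X s k * X s i from
      sum_congr rfl fun _ _ => mul_comm _ _]
    rw [show (∑ t, Y t j * Y t l) = ∑ t, Y t l * Y t j from
      sum_congr rfl fun _ _ => mul_comm _ _]
    rw [show (∑ u, Z u α * Z u β) = ∑ u, Z u β * Z u α from
      sum_congr rfl fun _ _ => mul_comm _ _]
    rw [show h i j α * h k l β * (∑ u, Z u β * Z u α) * (∑ s, X s k * X s i) *
          (∑ t, Y t l * Y t j)
        = h k l β * h i j α * (∑ u, Z u β * Z u α) * (∑ s, X s k * X s i) *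
          (∑ t, Y t l * Y t j) from by ring]
    exact factor3 (fun s => X s k) (fun s => X s i) (fun t => Y t l) (fun t => Y t j)
      (fun u => Z u β) (fun u => Z u α) (h k l β) (h i j α)
  calc Gq h (Xᴴ * X) (Yᴴ * Y) (Zᴴ * Z)
      = ∑ i, ∑ j, ∑ k, ∑ l, ∑ α, ∑ β, ∑ s, ∑ t, ∑ u,
          (X s k * Y t l * Z u β * h k l β) * (X s i * Y t j * Z u α * h i j α) := by
        unfold Gq
        exact sum_congr rfl fun i _ => sum_congr rfl fun j _ => sum_congr rfl fun k _ =>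
          sum_congr rfl fun l _ => sum_congr rfl fun α _ => sum_congr rfl fun β _ =>
          per i j k l α β
    _ = ∑ i, ∑ j, ∑ α, ∑ k, ∑ l, ∑ β, ∑ s, ∑ t, ∑ u,
          (X s k * Y t l * Z u β * h k l β) * (X s i * Y t j * Z u α * h i j α) := by
        exact sum_congr rfl fun i _ => sum_congr rfl fun j _ =>
          sum3_rot (fun k l α => ∑ β, ∑ s, ∑ t, ∑ u,
            (X s k * Y t l * Z u β * h k l β) * (X s i * Y t j * Z u α * h i j α))
    _ = ∑ p : Fin m × Fin m × Fin n, ∑ q : Fin m × Fin m × Fin n,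
          ∑ r : Fin m × Fin m × Fin n,
          (X r.1 q.1 * Y r.2.1 q.2.1 * Z r.2.2 q.2.2 * h q.1 q.2.1 q.2.2) *
          (X r.1 p.1 * Y r.2.1 p.2.1 * Z r.2.2 p.2.2 * h p.1 p.2.1 p.2.2) := by
        simp only [Fintype.sum_prod_type]
    _ = ∑ r : Fin m × Fin m × Fin n, ∑ p : Fin m × Fin m × Fin n,
          ∑ q : Fin m × Fin m × Fin n,
          (X r.1 q.1 * Y r.2.1 q.2.1 * Z r.2.2 q.2.2 * h q.1 q.2.1 q.2.2) *
          (X r.1 p.1 * Y r.2.1 p.2.1 * Z r.2.2 p.2.2 * h p.1 p.2.1 p.2.2) := by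
        exact sum3_rot _
    _ = ∑ s, ∑ t, ∑ u, ∑ i, ∑ j, ∑ α, ∑ k, ∑ l, ∑ β,
          (X s k * Y t l * Z u β * h k l β) * (X s i * Y t j * Z u α * h i j α) := by
        simp only [Fintype.sum_prod_type]
    _ = ∑ s, ∑ t, ∑ u, (∑ i, ∑ j, ∑ α, X s i * Y t j * Z u α * h i j α)^2 := by
        exact sum_congr rfl fun s _ => sum_congr rfl fun t _ => sum_congr rfl fun u _ =>
          (sqexp (fun i j α => X s i * Y t j * Z u α * h i j α)).symm

private lemma Gq_nonneg {m n : ℕ} (h : Fin m → Fin m → Fin n → ℝ)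
    {M₁ M₂ : Matrix (Fin m) (Fin m) ℝ} {N : Matrix (Fin n) (Fin n) ℝ}
    (h₁ : M₁.PosSemidef) (h₂ : M₂.PosSemidef) (hN : N.PosSemidef) :
    0 ≤ Gq h M₁ M₂ N := by
  obtain ⟨X, hX⟩ : ∃ X : Matrix (Fin m) (Fin m) ℝ, M₁ = Xᴴ * X := by
    open scoped MatrixOrder in exact CStarAlgebra.nonneg_iff_eq_star_mul_self.mp h₁.nonneg
  obtain ⟨Y, hY⟩ : ∃ Y : Matrix (Fin m) (Fin m) ℝ, M₂ = Yᴴ * Y := by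
    open scoped MatrixOrder in exact CStarAlgebra.nonneg_iff_eq_star_mul_self.mp h₂.nonneg
  obtain ⟨Z, hZ⟩ : ∃ Z : Matrix (Fin n) (Fin n) ℝ, N = Zᴴ * Z := by
    open scoped MatrixOrder in exact CStarAlgebra.nonneg_iff_eq_star_mul_self.mp hN.nonneg
  rw [hX, hY, hZ, gram_expand]
  exact Finset.sum_nonneg fun s _ => Finset.sum_nonneg fun t _ =>
    Finset.sum_nonneg fun u _ => sq_nonneg _

private lemma psd_smul {k : ℕ} {M : Matrix (Fin k) (Fin k) ℝ} (hM : M.PosSemidef) {c : ℝ}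
    (hc : 0 ≤ c) : (c • M).PosSemidef := by
  refine Matrix.PosSemidef.of_dotProduct_mulVec_nonneg ?_ fun x => ?_
  · have h1 := hM.1
    unfold Matrix.IsHermitian at *
    rw [Matrix.conjTranspose_smul, h1, star_trivial]
  · rw [Matrix.smul_mulVec, dotProduct_smul, smul_eq_mul]
    exact mul_nonneg hc (hM.dotProduct_mulVec_nonneg x)

private lemma posDef_one_add {k l : ℕ} (Q : Matrix (Fin k) (Fin l) ℝ) :
    ((1 : Matrix (Fin l) (Fin l) ℝ) + Qᴴ * Q).PosDef := by
  refine Matrix.PosDef.of_dotProduct_mulVec_pos (Matrix.isHermitian_one.add (Matrix.isHermitian_conjTranspose_mul_self Q))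
    fun x hx => ?_
  have expand : star x ⬝ᵥ ((1 + Qᴴ * Q) *ᵥ x)
      = star x ⬝ᵥ x + star (Q *ᵥ x) ⬝ᵥ (Q *ᵥ x) := by
    rw [Matrix.add_mulVec, Matrix.one_mulVec, dotProduct_add, ← Matrix.mulVec_mulVec,
      Matrix.dotProduct_mulVec, ← Matrix.star_mulVec]
  rw [expand]
  have h1 : 0 < star x ⬝ᵥ x := Matrix.dotProduct_star_self_pos_iff.mpr hx
  have h2 : 0 ≤ star (Q *ᵥ x) ⬝ᵥ (Q *ᵥ x) := dotProduct_star_self_nonneg _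
  linarith

private lemma psd_upper {k l : ℕ} (Q : Matrix (Fin k) (Fin l) ℝ) :
    ((1 + ∑ a, ∑ b, (Q a b)^2) • (1 : Matrix (Fin l) (Fin l) ℝ)
      - (1 + Qᴴ * Q)).PosSemidef := by
  set s : ℝ := 1 + ∑ a, ∑ b, (Q a b)^2 with hs
  refine Matrix.PosSemidef.of_dotProduct_mulVec_nonneg ?_ fun x => ?_
  · have h1 : ((1 : Matrix (Fin l) (Fin l) ℝ) + Qᴴ * Q).IsHermitian :=
      Matrix.isHermitian_one.add (Matrix.isHermitian_conjTranspose_mul_self Q)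
    unfold Matrix.IsHermitian at *
    rw [Matrix.conjTranspose_sub, Matrix.conjTranspose_smul, h1, star_trivial,
      Matrix.conjTranspose_one]
  · have expand : star x ⬝ᵥ ((s • (1 : Matrix (Fin l) (Fin l) ℝ) - (1 + Qᴴ * Q)) *ᵥ x)
        = s * (star x ⬝ᵥ x) - (star x ⬝ᵥ x) - star (Q *ᵥ x) ⬝ᵥ (Q *ᵥ x) := by
      rw [Matrix.sub_mulVec, Matrix.smul_mulVec, Matrix.one_mulVec, Matrix.add_mulVec,
        Matrix.one_mulVec, dotProduct_sub, dotProduct_add,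
        dotProduct_smul, smul_eq_mul, ← Matrix.mulVec_mulVec,
        Matrix.dotProduct_mulVec, ← Matrix.star_mulVec]
      ring
    rw [expand]
    have hsx : star x = x := star_trivial x
    have key : star (Q *ᵥ x) ⬝ᵥ (Q *ᵥ x) ≤ (∑ a, ∑ b, (Q a b)^2) * (star x ⬝ᵥ x) := by
      rw [hsx, star_trivial]
      have each : ∀ a, (Q *ᵥ x) a * (Q *ᵥ x) a ≤ (∑ b, (Q a b)^2) * (x ⬝ᵥ x) := by
        intro a
        have hcs := Finset.sum_mul_sq_le_sq_mul_sq Finset.univ (fun b => Q a b) x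
        calc (Q *ᵥ x) a * (Q *ᵥ x) a = (∑ b, Q a b * x b)^2 := by rw [← sq]; rfl
          _ ≤ (∑ b, (Q a b)^2) * (∑ b, (x b)^2) := hcs
          _ = (∑ b, (Q a b)^2) * (x ⬝ᵥ x) := by
              congr 1
              exact Finset.sum_congr rfl fun b _ => sq (x b)
      calc (Q *ᵥ x) ⬝ᵥ (Q *ᵥ x) = ∑ a, (Q *ᵥ x) a * (Q *ᵥ x) a := rfl
        _ ≤ ∑ a, (∑ b, (Q a b)^2) * (x ⬝ᵥ x) := Finset.sum_le_sum fun a _ => each a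
        _ = (∑ a, ∑ b, (Q a b)^2) * (x ⬝ᵥ x) := by rw [Finset.sum_mul]
    have heq : s * (star x ⬝ᵥ x) - (star x ⬝ᵥ x)
        = (∑ a, ∑ b, (Q a b)^2) * (star x ⬝ᵥ x) := by
      rw [hs]; ring
    linarith

private lemma inv_lower {k : ℕ} {A : Matrix (Fin k) (Fin k) ℝ} (hA : A.PosDef) {s : ℝ}
    (hs : 0 < s) (hle : (s • (1 : Matrix (Fin k) (Fin k) ℝ) - A).PosSemidef) :
    (A⁻¹ - s⁻¹ • (1 : Matrix (Fin k) (Fin k) ℝ)).PosSemidef := by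
  have hinv : A⁻¹.PosDef := hA.inv
  have hu : IsUnit A.det := (Matrix.isUnit_iff_isUnit_det _).mp hA.isUnit
  have hAinvA : A⁻¹ * A = 1 := Matrix.nonsing_inv_mul _ hu
  have hAAinv : A * A⁻¹ = 1 := Matrix.mul_nonsing_inv _ hu
  obtain ⟨S, hSH, hSS⟩ : ∃ S : Matrix (Fin k) (Fin k) ℝ, Sᴴ = S ∧ S * S = A := by
    open scoped MatrixOrder in
    exact ⟨CFC.sqrt A, (CFC.sqrt_nonneg A).posSemidef.1, CFC.sqrt_mul_sqrt_self A hA.posSemidef.nonneg⟩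
  have hK : (S * (s • (1 : Matrix (Fin k) (Fin k) ℝ) - A) * S).PosSemidef := by
    have h2 := hle.mul_mul_conjTranspose_same S
    rwa [hSH] at h2
  have hKval : S * (s • (1 : Matrix (Fin k) (Fin k) ℝ) - A) * S = s • A - A * A := by
    rw [Matrix.mul_sub, Matrix.sub_mul]
    congr 1
    · rw [Matrix.mul_smul, Matrix.mul_one, Matrix.smul_mul, hSS]
    · calc S * A * S = S * (S * S) * S := by rw [hSS]
        _ = (S * S) * (S * S) := by noncomm_ring
        _ = A * A := by rw [hSS]
  rw [hKval] at hK
  have hfin : A⁻¹ - s⁻¹ • (1 : Matrix (Fin k) (Fin k) ℝ)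
      = s⁻¹ • (A⁻¹ * (s • A - A * A) * A⁻¹ᴴ) := by
    rw [hinv.1]
    rw [Matrix.mul_sub, Matrix.sub_mul]
    rw [Matrix.mul_smul, Matrix.smul_mul, hAinvA]
    rw [show A⁻¹ * (A * A) * A⁻¹ = (A⁻¹ * A) * (A * A⁻¹) from by noncomm_ring,
      hAinvA, hAAinv, Matrix.mul_one, Matrix.one_mul]
    rw [smul_sub, smul_smul, inv_mul_cancel₀ hs.ne', one_smul]
  rw [hfin]
  exact psd_smul (hK.mul_mul_conjTranspose_same A⁻¹) (inv_nonneg.mpr hs.le)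

/-- The purely linear-algebraic core of the theorem. -/
private theorem key_ineq {m n : ℕ} (P : Matrix (Fin m) (Fin n) ℝ)
    (h : Fin m → Fin m → Fin n → ℝ) :
    (∑ α, ∑ i, ∑ j, (h i j α)^2)
      ≤ (1 + ∑ i, ∑ α, (P i α)^2)^3 *
        Gq h (1 + P * Pᴴ)⁻¹ (1 + P * Pᴴ)⁻¹ (1 + Pᴴ * P)⁻¹ := by
  set lam : ℝ := 1 + ∑ i, ∑ α, (P i α)^2 with hlamdef
  have hlam : 0 < lam := by
    have : (0:ℝ) ≤ ∑ i, ∑ α, (P i α)^2 :=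
      Finset.sum_nonneg fun i _ => Finset.sum_nonneg fun α _ => sq_nonneg _
    rw [hlamdef]; linarith
  have hPHH : (Pᴴ)ᴴ = P := Matrix.conjTranspose_conjTranspose P
  have hA : ((1 : Matrix (Fin m) (Fin m) ℝ) + P * Pᴴ).PosDef := by
    have h0 := posDef_one_add (Pᴴ)
    rwa [hPHH] at h0
  have hAup : (lam • (1 : Matrix (Fin m) (Fin m) ℝ) - (1 + P * Pᴴ)).PosSemidef := by
    have h0 := psd_upper (Pᴴ)
    rw [hPHH] at h0
    have hsum : (∑ a, ∑ b, ((Pᴴ) a b)^2) = ∑ i, ∑ α, (P i α)^2 := by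
      rw [Finset.sum_comm]
      exact sum_congr rfl fun i _ => sum_congr rfl fun α _ => by
        simp [Matrix.conjTranspose_apply]
    rwa [hsum] at h0
  have hB : ((1 : Matrix (Fin n) (Fin n) ℝ) + Pᴴ * P).PosDef := posDef_one_add P
  have hBup : (lam • (1 : Matrix (Fin n) (Fin n) ℝ) - (1 + Pᴴ * P)).PosSemidef :=
    psd_upper P
  have hAinv := inv_lower hA hlam hAup
  have hBinv := inv_lower hB hlam hBup
  set M := ((1 : Matrix (Fin m) (Fin m) ℝ) + P * Pᴴ)⁻¹ with hM
  set N := ((1 : Matrix (Fin n) (Fin n) ℝ) + Pᴴ * P)⁻¹ with hN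
  set c : ℝ := lam⁻¹ with hc
  have hMpsd : M.PosSemidef := hA.inv.posSemidef
  have hNpsd : N.PosSemidef := hB.inv.posSemidef
  have h1psdm : (1 : Matrix (Fin m) (Fin m) ℝ).PosSemidef := Matrix.PosDef.one.posSemidef
  have hcnn : 0 ≤ c := inv_nonneg.mpr hlam.le
  have t1 : 0 ≤ Gq h (M - c • 1) M N := Gq_nonneg h hAinv hMpsd hNpsd
  have t2 : 0 ≤ Gq h 1 (M - c • 1) N := Gq_nonneg h h1psdm hAinv hNpsd
  have t3 : 0 ≤ Gq h 1 1 (N - c • 1) := Gq_nonneg h h1psdm h1psdm hBinv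
  have hGone : Gq h 1 1 1 = ∑ i, ∑ j, ∑ α, (h i j α)^2 := Gq_one h
  have hre : (∑ α, ∑ i, ∑ j, (h i j α)^2) = ∑ i, ∑ j, ∑ α, (h i j α)^2 :=
    (sum3_rot (fun i j α => (h i j α)^2)).symm
  have hG : c^3 * (∑ i, ∑ j, ∑ α, (h i j α)^2) ≤ Gq h M M N := by
    rw [Gq_decomp h M N c, hGone]
    have u2 : 0 ≤ c * Gq h 1 (M - c • 1) N := mul_nonneg hcnn t2
    have u3 : 0 ≤ c^2 * Gq h 1 1 (N - c • 1) := mul_nonneg (by positivity) t3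
    linarith
  have hlc : lam^3 * c^3 = 1 := by
    rw [hc, ← mul_pow, mul_inv_cancel₀ hlam.ne', one_pow]
  calc (∑ α, ∑ i, ∑ j, (h i j α)^2)
      = (lam^3 * c^3) * (∑ i, ∑ j, ∑ α, (h i j α)^2) := by rw [hlc, one_mul, hre]
    _ = lam^3 * (c^3 * (∑ i, ∑ j, ∑ α, (h i j α)^2)) := by ring
    _ ≤ lam^3 * Gq h M M N := by
        exact mul_le_mul_of_nonneg_left hG (by positivity)

end Aux

/-- First partial derivatives `∂ψ_α/∂x_i`. -/
noncomputable def gradEntry {m n : ℕ} (ψ : EuclideanSpace ℝ (Fin m) → (Fin n → ℝ))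
    (x : EuclideanSpace ℝ (Fin m)) (i : Fin m) (α : Fin n) : ℝ :=
  fderiv ℝ ψ x (EuclideanSpace.single i 1) α

/-- Second partial derivatives `h_{ijα} = ∂²ψ_α/∂x_i∂x_j`, the components of the second
fundamental form of the graph of `ψ`. -/
noncomputable def hessEntry {m n : ℕ} (ψ : EuclideanSpace ℝ (Fin m) → (Fin n → ℝ))
    (x : EuclideanSpace ℝ (Fin m)) (i j : Fin m) (α : Fin n) : ℝ :=
  fderiv ℝ (fun y => fderiv ℝ ψ y (EuclideanSpace.single j 1) α) x (EuclideanSpace.single i 1)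

/-- The induced metric `g_{ij} = δ_{ij} + D_iψ · D_jψ` on the graph. -/
noncomputable def graphMetric {m n : ℕ} (ψ : EuclideanSpace ℝ (Fin m) → (Fin n → ℝ))
    (x : EuclideanSpace ℝ (Fin m)) : Matrix (Fin m) (Fin m) ℝ :=
  Matrix.of fun i j => (if i = j then (1:ℝ) else 0) + ∑ α, gradEntry ψ x i α * gradEntry ψ x j α

/-- The normal bundle metric `g_{αβ} = δ_{αβ} + Dψ_α · Dψ_β`. -/
noncomputable def normalMetric {m n : ℕ} (ψ : EuclideanSpace ℝ (Fin m) → (Fin n → ℝ))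
    (x : EuclideanSpace ℝ (Fin m)) : Matrix (Fin n) (Fin n) ℝ :=
  Matrix.of fun α β => (if α = β then (1:ℝ) else 0) + ∑ i, gradEntry ψ x i α * gradEntry ψ x i β

/-- `|II|²_g = h_{ijα} h_{klβ} g^{αβ} g^{ik} g^{jl}`, the squared norm of the second
fundamental form of the graph of `ψ`, taken in the induced metrics. -/
noncomputable def sffNormSq {m n : ℕ} (ψ : EuclideanSpace ℝ (Fin m) → (Fin n → ℝ))
    (x : EuclideanSpace ℝ (Fin m)) : ℝ :=
  ∑ i, ∑ j, ∑ k, ∑ l, ∑ α, ∑ β,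
    hessEntry ψ x i j α * hessEntry ψ x k l β *
      (normalMetric ψ x)⁻¹ α β * (graphMetric ψ x)⁻¹ i k * (graphMetric ψ x)⁻¹ j l

/-- For a `C²` function `ψ : D_r ⊆ ℝᵐ → ℝⁿ`,
`|D²ψ|² ≤ (1 + |Dψ|²)³ |II|²_g`, where `II` is the second fundamental form of the graph of
`ψ` with components `h_{ijα} = ∂²ψ_α/∂x_i∂x_j`, and `|D²ψ|² = ∑_{α,i,j} (∂²ψ_α/∂x_i∂x_j)²`. -/
theorem hessian_le_sff_norm {m n : ℕ} (r : ℝ)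
    (ψ : EuclideanSpace ℝ (Fin m) → (Fin n → ℝ)) (hψ : ContDiff ℝ 2 ψ)
    (x : EuclideanSpace ℝ (Fin m)) (hx : x ∈ Metric.ball (0 : EuclideanSpace ℝ (Fin m)) r) :
    ∑ α, ∑ i, ∑ j, (hessEntry ψ x i j α) ^ 2 ≤
      (1 + ∑ i, ∑ α, (gradEntry ψ x i α) ^ 2) ^ 3 * sffNormSq ψ x := by
  set P : Matrix (Fin m) (Fin n) ℝ := Matrix.of fun i α => gradEntry ψ x i α with hP
  have hGM : graphMetric ψ x = 1 + P * Pᴴ := by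
    ext i j
    simp [graphMetric, Matrix.add_apply, Matrix.one_apply, Matrix.mul_apply,
      Matrix.conjTranspose_apply, hP]
  have hNM : normalMetric ψ x = 1 + Pᴴ * P := by
    ext α β
    simp [normalMetric, Matrix.add_apply, Matrix.one_apply, Matrix.mul_apply,
      Matrix.conjTranspose_apply, hP]
  have hsff : sffNormSq ψ x
      = Gq (fun i j α => hessEntry ψ x i j α) (1 + P * Pᴴ)⁻¹ (1 + P * Pᴴ)⁻¹
          (1 + Pᴴ * P)⁻¹ := by
    rw [Gq, sffNormSq, hGM, hNM]
  rw [hsff]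
  have hgrad : (∑ i, ∑ α, (gradEntry ψ x i α)^2) = ∑ i, ∑ α, (P i α)^2 := by
    simp [hP]
  rw [hgrad]
  exact key_ineq P (fun i j α => hessEntry ψ x i j α)
end

section
/- Suppose the metrics g(t), t ∈ [0,T), on a compact manifold satisfy |∂g/∂t|_{g(t)} ≤ 2C (T-t)^{-1/p} for some p ∈ (1,2] and constant C. Then the g(t) are uniformly equivalent, and there is a constant C' such that for all 0 ≤ t₀ ≤ t₁ < T, |g(t₁) - g(t₀)|_{g(0)} ≤ C' ((T-t₀)^{1-1/p} - (T-t₁)^{1-1/p}); in particular t ↦ g(t) is uniformly continuous on [0,T) in the g(0)-norm. -/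
open Matrix

/-- The tensor norm `|A|_g = √(g^{ik} g^{jl} A_{ij} A_{kl}) = √(tr(g⁻¹ A g⁻¹ A))` of a
symmetric 2-tensor `A` with respect to a metric `g`, in local components. -/
noncomputable def tensorNorm {k : ℕ} (g A : Matrix (Fin k) (Fin k) ℝ) : ℝ :=
  Real.sqrt ((g⁻¹ * A * g⁻¹ * A).trace)

namespace TypeIAux
open Finset

variable {k : ℕ}

/-- squared Frobenius norm -/
noncomputable def froSq (X : Matrix (Fin k) (Fin k) ℝ) : ℝ := ∑ i, ∑ j, (X i j) ^ 2

lemma froSq_nonneg (X : Matrix (Fin k) (Fin k) ℝ) : 0 ≤ froSq X :=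
  Finset.sum_nonneg fun _ _ => Finset.sum_nonneg fun _ _ => sq_nonneg _

lemma froSq_transpose (X : Matrix (Fin k) (Fin k) ℝ) : froSq Xᵀ = froSq X := by
  rw [froSq, froSq, Finset.sum_comm]
  rfl

lemma trace_tmul_eq_froSq (X : Matrix (Fin k) (Fin k) ℝ) : (Xᵀ * X).trace = froSq X := by
  simp only [Matrix.trace, Matrix.diag, Matrix.mul_apply, Matrix.transpose_apply, froSq, sq]
  exact Finset.sum_comm

lemma froSq_mul_le (X Y : Matrix (Fin k) (Fin k) ℝ) :
    froSq (X * Y) ≤ froSq X * froSq Y := by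
  have h : ∀ i j, ((X * Y) i j) ^ 2 ≤ (∑ a, (X i a) ^ 2) * (∑ a, (Y a j) ^ 2) := by
    intro i j
    rw [Matrix.mul_apply]
    exact Finset.sum_mul_sq_le_sq_mul_sq _ _ _
  calc froSq (X * Y) ≤ ∑ i, ∑ j, (∑ a, (X i a) ^ 2) * (∑ a, (Y a j) ^ 2) := by
        apply Finset.sum_le_sum; intro i _; apply Finset.sum_le_sum; intro j _; exact h i j
    _ = froSq X * froSq Yᵀ := by
        rw [froSq, froSq, Finset.sum_mul_sum]
        simp [Matrix.transpose_apply]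
    _ = froSq X * froSq Y := by rw [froSq_transpose]

lemma sum_sq_mulVec_le (X : Matrix (Fin k) (Fin k) ℝ) (w : Fin k → ℝ) :
    ∑ i, (X.mulVec w i) ^ 2 ≤ froSq X * ∑ j, (w j) ^ 2 := by
  have h : ∀ i, (X.mulVec w i) ^ 2 ≤ (∑ a, (X i a) ^ 2) * (∑ a, (w a) ^ 2) := by
    intro i
    rw [Matrix.mulVec, dotProduct]
    exact Finset.sum_mul_sq_le_sq_mul_sq _ _ _
  calc ∑ i, (X.mulVec w i) ^ 2 ≤ ∑ i, (∑ a, (X i a) ^ 2) * (∑ a, (w a) ^ 2) :=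
        Finset.sum_le_sum fun i _ => h i
    _ = froSq X * ∑ j, (w j) ^ 2 := by rw [froSq, Finset.sum_mul]

lemma sq_entry_le_froSq (X : Matrix (Fin k) (Fin k) ℝ) (i j : Fin k) :
    (X i j) ^ 2 ≤ froSq X := by
  have h1 : (X i j) ^ 2 ≤ ∑ b, (X i b) ^ 2 :=
    Finset.single_le_sum (f := fun b => (X i b) ^ 2) (fun b _ => sq_nonneg _) (Finset.mem_univ j)
  exact h1.trans (Finset.single_le_sum (f := fun a => ∑ b, (X a b) ^ 2)
    (fun a _ => Finset.sum_nonneg fun b _ => sq_nonneg _) (Finset.mem_univ i))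

lemma sqrt_froSq_le_sum_abs (X : Matrix (Fin k) (Fin k) ℝ) :
    Real.sqrt (froSq X) ≤ ∑ i, ∑ j, abs (X i j) := by
  have h : froSq X ≤ (∑ i, ∑ j, abs (X i j)) ^ 2 := by
    calc froSq X = ∑ i, ∑ j, abs (X i j) ^ 2 := by simp [froSq, sq_abs]
      _ ≤ ∑ i, (∑ j, abs (X i j)) ^ 2 :=
          Finset.sum_le_sum fun i _ =>
            Finset.sum_sq_le_sq_sum_of_nonneg fun j _ => abs_nonneg _
      _ ≤ (∑ i, ∑ j, abs (X i j)) ^ 2 :=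
          Finset.sum_sq_le_sq_sum_of_nonneg fun i _ =>
            Finset.sum_nonneg fun j _ => abs_nonneg _
  calc Real.sqrt (froSq X) ≤ Real.sqrt ((∑ i, ∑ j, abs (X i j)) ^ 2) := Real.sqrt_le_sqrt h
    _ = |∑ i, ∑ j, abs (X i j)| := Real.sqrt_sq_eq_abs _
    _ = ∑ i, ∑ j, abs (X i j) := abs_of_nonneg (Finset.sum_nonneg fun i _ =>
        Finset.sum_nonneg fun j _ => abs_nonneg _)


section B

variable {g : Matrix (Fin k) (Fin k) ℝ}

open scoped MatrixOrder Matrix.Norms.L2Operator in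
/-- a posdef real matrix has a symmetric invertible square root -/
lemma exists_sqrt (hg : g.PosDef) :
    ∃ S : Matrix (Fin k) (Fin k) ℝ, S * S = g ∧ Sᵀ = S ∧ IsUnit S.det := by
  refine ⟨CFC.sqrt g, CFC.sqrt_mul_sqrt_self g hg.posSemidef.nonneg, ?_, ?_⟩
  · have h := (CFC.sqrt_nonneg g).posSemidef.1
    rwa [Matrix.IsHermitian, conjTranspose_eq_transpose_of_trivial] at h
  · have h : (CFC.sqrt g).det * (CFC.sqrt g).det = g.det := by
      rw [← Matrix.det_mul, CFC.sqrt_mul_sqrt_self g hg.posSemidef.nonneg]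
    have hd : g.det ≠ 0 := ne_of_gt hg.det_pos
    refine isUnit_iff_ne_zero.mpr fun h0 => hd ?_
    rw [← h, h0, zero_mul]

variable {S : Matrix (Fin k) (Fin k) ℝ} (hSg : S * S = g) (hSt : Sᵀ = S) (hdet : IsUnit S.det)

section
include hdet

lemma sqrt_inv_mul : S⁻¹ * S = 1 := Matrix.nonsing_inv_mul _ hdet

lemma sqrt_mul_inv : S * S⁻¹ = 1 := Matrix.mul_nonsing_inv _ hdet

include hSt in
lemma sqrt_inv_transpose : (S⁻¹)ᵀ = S⁻¹ := by
  rw [Matrix.transpose_nonsing_inv, hSt]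

include hSg in
lemma inv_eq_sqrt_inv_mul : g⁻¹ = S⁻¹ * S⁻¹ := by
  apply Matrix.inv_eq_left_inv
  have h : (S⁻¹ * S⁻¹) * (S * S) = 1 := by
    rw [Matrix.mul_assoc, ← Matrix.mul_assoc S⁻¹ S S, sqrt_inv_mul hdet, Matrix.one_mul,
      sqrt_inv_mul hdet]
  rwa [hSg] at h

include hSg hSt in
/-- `tensorNorm g A = ‖S⁻¹ A S⁻¹‖_F` for `A` symmetric. -/
lemma tensorNorm_eq (A : Matrix (Fin k) (Fin k) ℝ) (hA : A.IsSymm) :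
    tensorNorm g A = Real.sqrt (froSq (S⁻¹ * A * S⁻¹)) := by
  have hBt : (S⁻¹ * A * S⁻¹)ᵀ = S⁻¹ * A * S⁻¹ := by
    rw [Matrix.transpose_mul, Matrix.transpose_mul, sqrt_inv_transpose hSt hdet, hA.eq,
      Matrix.mul_assoc]
  have hinv : S⁻¹ * S = 1 := sqrt_inv_mul hdet
  have h1 : g⁻¹ * A * g⁻¹ * A = S⁻¹ * ((S⁻¹ * A * S⁻¹) * (S⁻¹ * A * S⁻¹) * S) := by
    rw [inv_eq_sqrt_inv_mul hSg hdet]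
    simp only [Matrix.mul_assoc, hinv, Matrix.mul_one]
  have h2 : (g⁻¹ * A * g⁻¹ * A).trace = ((S⁻¹ * A * S⁻¹) * (S⁻¹ * A * S⁻¹)).trace := by
    rw [h1, Matrix.trace_mul_comm]
    rw [Matrix.mul_assoc _ S S⁻¹, sqrt_mul_inv hdet, Matrix.mul_one]
  have h3 : ((S⁻¹ * A * S⁻¹) * (S⁻¹ * A * S⁻¹)).trace = froSq (S⁻¹ * A * S⁻¹) := by
    rw [← trace_tmul_eq_froSq (S⁻¹ * A * S⁻¹), hBt]
  rw [tensorNorm, h2, h3]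

end
end B

section C
/-- quadratic form -/
noncomputable def Q (g : Matrix (Fin k) (Fin k) ℝ) (v : Fin k → ℝ) : ℝ := v ⬝ᵥ g.mulVec v

variable {g : Matrix (Fin k) (Fin k) ℝ} {S : Matrix (Fin k) (Fin k) ℝ}
  (hSg : S * S = g) (hSt : Sᵀ = S) (hdet : IsUnit S.det)

include hSg hSt in
lemma Q_eq_sum_sq (v : Fin k → ℝ) : Q g v = ∑ i, (S.mulVec v i) ^ 2 := by
  have h1 : Q g v = v ⬝ᵥ S.mulVec (S.mulVec v) := by
    rw [Q, ← hSg, ← Matrix.mulVec_mulVec]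
  rw [h1, Matrix.dotProduct_mulVec, ← hSt, Matrix.vecMul_transpose, hSt]
  simp [dotProduct, sq]

include hSt hdet in
lemma mulVec_inv_conj (A : Matrix (Fin k) (Fin k) ℝ) (v : Fin k → ℝ) :
    v ⬝ᵥ A.mulVec v = (S.mulVec v) ⬝ᵥ (S⁻¹ * A * S⁻¹).mulVec (S.mulVec v) := by
  have h1 : (S⁻¹ * A * S⁻¹).mulVec (S.mulVec v) = S⁻¹.mulVec (A.mulVec v) := by
    rw [Matrix.mulVec_mulVec, Matrix.mul_assoc, Matrix.mul_assoc, sqrt_inv_mul hdet,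
      Matrix.mul_one, ← Matrix.mulVec_mulVec]
  rw [h1, Matrix.dotProduct_mulVec (S.mulVec v) S⁻¹, ← sqrt_inv_transpose hSt hdet,
    Matrix.vecMul_transpose, Matrix.mulVec_mulVec, sqrt_inv_mul hdet, Matrix.one_mulVec]

include hSg hSt hdet in
/-- Lemma A: `|v ⬝ᵥ A v| ≤ |A|_g · (v ⬝ᵥ g v)` for symmetric `A`. -/
lemma abs_quad_le (A : Matrix (Fin k) (Fin k) ℝ) (hA : A.IsSymm) (v : Fin k → ℝ) :
    |v ⬝ᵥ A.mulVec v| ≤ tensorNorm g A * Q g v := by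
  set w := S.mulVec v with hw
  set B := S⁻¹ * A * S⁻¹ with hB
  rw [mulVec_inv_conj hSt hdet A v]
  have key : |w ⬝ᵥ B.mulVec w| ≤ Real.sqrt (froSq B) * ∑ i, (w i) ^ 2 := by
    have h1 : (w ⬝ᵥ B.mulVec w) ^ 2 ≤ (∑ i, (w i) ^ 2) * ∑ i, (B.mulVec w i) ^ 2 := by
      rw [dotProduct]
      exact Finset.sum_mul_sq_le_sq_mul_sq _ _ _
    have h2 : (∑ i, (w i) ^ 2) * ∑ i, (B.mulVec w i) ^ 2 ≤
        froSq B * (∑ i, (w i) ^ 2) ^ 2 := by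
      calc (∑ i, (w i) ^ 2) * ∑ i, (B.mulVec w i) ^ 2
          ≤ (∑ i, (w i) ^ 2) * (froSq B * ∑ j, (w j) ^ 2) :=
            mul_le_mul_of_nonneg_left (sum_sq_mulVec_le B w)
              (Finset.sum_nonneg fun i _ => sq_nonneg _)
        _ = froSq B * (∑ i, (w i) ^ 2) ^ 2 := by ring
    have h3 : (w ⬝ᵥ B.mulVec w) ^ 2 ≤ (Real.sqrt (froSq B) * ∑ i, (w i) ^ 2) ^ 2 := by
      calc (w ⬝ᵥ B.mulVec w) ^ 2 ≤ froSq B * (∑ i, (w i) ^ 2) ^ 2 := h1.trans h2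
        _ = (Real.sqrt (froSq B) * ∑ i, (w i) ^ 2) ^ 2 := by
            rw [mul_pow, Real.sq_sqrt (froSq_nonneg B)]
    have h4 : 0 ≤ Real.sqrt (froSq B) * ∑ i, (w i) ^ 2 :=
      mul_nonneg (Real.sqrt_nonneg _) (Finset.sum_nonneg fun i _ => sq_nonneg _)
    exact abs_le_of_sq_le_sq' h3 h4 |>.2 |> fun h => abs_le.mpr ⟨(abs_le_of_sq_le_sq' h3 h4).1, h⟩
  rw [tensorNorm_eq hSg hSt hdet A hA, Q_eq_sum_sq hSg hSt v]
  exact key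

include hSg hSt hdet in
/-- column-sum bound: `‖S S₀⁻¹‖_F² ≤ k·K` when `Q g ≤ K Q g₀`. -/
lemma froSq_conj_le {g₀ S₀ : Matrix (Fin k) (Fin k) ℝ}
    (hS₀g : S₀ * S₀ = g₀) (hS₀t : S₀ᵀ = S₀) (hS₀det : IsUnit S₀.det)
    (K : ℝ) (hQ : ∀ v, Q g v ≤ K * Q g₀ v) :
    froSq (S * S₀⁻¹) ≤ k * K := by
  have hcol : ∀ j : Fin k, ∑ i, ((S * S₀⁻¹) i j) ^ 2 ≤ K := by
    intro j
    have e1 : ∀ i, (S * S₀⁻¹) i j = S.mulVec (S₀⁻¹.mulVec (Pi.single j 1)) i := by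
      intro i
      simp [Matrix.mulVec, dotProduct, Matrix.mul_apply, Pi.single_apply, mul_ite,
        Finset.mul_sum]
    have e2 : ∑ i, ((S * S₀⁻¹) i j) ^ 2 = Q g (S₀⁻¹.mulVec (Pi.single j 1)) := by
      rw [Q_eq_sum_sq hSg hSt]
      exact Finset.sum_congr rfl fun i _ => by rw [e1 i]
    have e3 : Q g₀ (S₀⁻¹.mulVec (Pi.single j 1)) = 1 := by
      rw [Q_eq_sum_sq hS₀g hS₀t, Matrix.mulVec_mulVec, sqrt_mul_inv hS₀det, Matrix.one_mulVec]
      simp [Pi.single_apply, sq]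
    calc ∑ i, ((S * S₀⁻¹) i j) ^ 2 = Q g (S₀⁻¹.mulVec (Pi.single j 1)) := e2
      _ ≤ K * Q g₀ (S₀⁻¹.mulVec (Pi.single j 1)) := hQ _
      _ = K := by rw [e3, mul_one]
  calc froSq (S * S₀⁻¹) = ∑ j, ∑ i, ((S * S₀⁻¹) i j) ^ 2 := Finset.sum_comm
    _ ≤ ∑ _j : Fin k, K := Finset.sum_le_sum fun j _ => hcol j
    _ = k * K := by simp [mul_comm]

include hSg hSt hdet in
/-- Lemma B: comparison of tensor norms under quadratic-form domination. -/
lemma tensorNorm_comparison {g₀ S₀ : Matrix (Fin k) (Fin k) ℝ}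
    (hS₀g : S₀ * S₀ = g₀) (hS₀t : S₀ᵀ = S₀) (hS₀det : IsUnit S₀.det)
    (K : ℝ) (hK : 0 ≤ K) (hQ : ∀ v, Q g v ≤ K * Q g₀ v)
    (A : Matrix (Fin k) (Fin k) ℝ) (hA : A.IsSymm) :
    tensorNorm g₀ A ≤ (k * K) * tensorNorm g A := by
  set M : Matrix (Fin k) (Fin k) ℝ := S₀⁻¹ * S with hM
  have hMt : Mᵀ = S * S₀⁻¹ := by
    rw [hM, Matrix.transpose_mul, hSt, sqrt_inv_transpose hS₀t hS₀det]
  have hfM : froSq M ≤ k * K := by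
    rw [← froSq_transpose M, hMt]
    exact froSq_conj_le hSg hSt hdet hS₀g hS₀t hS₀det K hQ
  have hfMt : froSq Mᵀ ≤ k * K := by
    rw [hMt]
    exact froSq_conj_le hSg hSt hdet hS₀g hS₀t hS₀det K hQ
  have hconj : S₀⁻¹ * A * S₀⁻¹ = M * (S⁻¹ * A * S⁻¹) * Mᵀ := by
    rw [hM, hMt]
    have h1 : S₀⁻¹ * S * (S⁻¹ * A * S⁻¹) * (S * S₀⁻¹)
        = S₀⁻¹ * ((S * S⁻¹) * A * (S⁻¹ * S)) * S₀⁻¹ := by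
      simp only [Matrix.mul_assoc]
    rw [h1, sqrt_mul_inv hdet, sqrt_inv_mul hdet, Matrix.one_mul, Matrix.mul_one]
  have hle : froSq (S₀⁻¹ * A * S₀⁻¹) ≤ (k * K) ^ 2 * froSq (S⁻¹ * A * S⁻¹) := by
    rw [hconj]
    calc froSq (M * (S⁻¹ * A * S⁻¹) * Mᵀ)
        ≤ froSq (M * (S⁻¹ * A * S⁻¹)) * froSq Mᵀ := froSq_mul_le _ _
      _ ≤ froSq M * froSq (S⁻¹ * A * S⁻¹) * froSq Mᵀ :=
          mul_le_mul_of_nonneg_right (froSq_mul_le _ _) (froSq_nonneg _)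
      _ ≤ (k * K) * froSq (S⁻¹ * A * S⁻¹) * (k * K) := by
          apply mul_le_mul
          · exact mul_le_mul_of_nonneg_right hfM (froSq_nonneg _)
          · exact hfMt
          · exact froSq_nonneg _
          · exact mul_nonneg (mul_nonneg (Nat.cast_nonneg k) hK) (froSq_nonneg _)
      _ = (k * K) ^ 2 * froSq (S⁻¹ * A * S⁻¹) := by ring
  rw [tensorNorm_eq hS₀g hS₀t hS₀det A hA, tensorNorm_eq hSg hSt hdet A hA]
  calc Real.sqrt (froSq (S₀⁻¹ * A * S₀⁻¹))
      ≤ Real.sqrt ((k * K) ^ 2 * froSq (S⁻¹ * A * S⁻¹)) := Real.sqrt_le_sqrt hle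
    _ = (k * K) * Real.sqrt (froSq (S⁻¹ * A * S⁻¹)) := by
        rw [Real.sqrt_mul (sq_nonneg _), Real.sqrt_sq (by positivity)]


end C
section D


lemma le_of_deriv_nonneg (a b : ℝ) (hab : a ≤ b) (f f' : ℝ → ℝ)
    (hf : ∀ t ∈ Set.Icc a b, HasDerivAt f (f' t) t)
    (h0 : ∀ t ∈ Set.Ioo a b, 0 ≤ f' t) : f a ≤ f b := by
  have hm : MonotoneOn f (Set.Icc a b) := by
    apply monotoneOn_of_deriv_nonneg (convex_Icc a b)
    · exact fun t ht => (hf t ht).continuousAt.continuousWithinAt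
    · intro t ht
      rw [interior_Icc] at ht
      exact ((hf t (Set.Ioo_subset_Icc_self ht)).differentiableAt).differentiableWithinAt
    · intro t ht
      rw [interior_Icc] at ht
      rw [(hf t (Set.Ioo_subset_Icc_self ht)).deriv]
      exact h0 t ht
  exact hm (Set.left_mem_Icc.2 hab) (Set.right_mem_Icc.2 hab) hab

/-- mean value bound: `|u(b) - u(a)| ≤ F(b) - F(a)` when `|u'| ≤ F'`. -/
lemma abs_sub_le_of_hasDerivAt (a b : ℝ) (hab : a ≤ b) (u u' F F' : ℝ → ℝ)
    (hu : ∀ t ∈ Set.Icc a b, HasDerivAt u (u' t) t)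
    (hF : ∀ t ∈ Set.Icc a b, HasDerivAt F (F' t) t)
    (hb : ∀ t ∈ Set.Icc a b, |u' t| ≤ F' t) : |u b - u a| ≤ F b - F a := by
  have h1 : (F - u) a ≤ (F - u) b := by
    apply le_of_deriv_nonneg a b hab _ (fun t => F' t - u' t)
    · exact fun t ht => (hF t ht).sub (hu t ht)
    · intro t ht
      have := abs_le.1 (hb t (Set.Ioo_subset_Icc_self ht))
      linarith [this.2]
  have h2 : (F + u) a ≤ (F + u) b := by
    apply le_of_deriv_nonneg a b hab _ (fun t => F' t + u' t)
    · exact fun t ht => (hF t ht).add (hu t ht)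
    · intro t ht
      have := abs_le.1 (hb t (Set.Ioo_subset_Icc_self ht))
      linarith [this.1]
  simp only [Pi.sub_apply, Pi.add_apply] at h1 h2
  rw [abs_le]
  constructor <;> linarith

/-- derivative of the antiderivative `t ↦ -(c (T - t)^q)`. -/
lemma hasDerivAt_antideriv (c q T t : ℝ) (ht : t < T) :
    HasDerivAt (fun s => -(c * (T - s) ^ q)) (c * q * (T - t) ^ (q - 1)) t := by
  have h1 : HasDerivAt (fun s : ℝ => T - s) (-1) t := (hasDerivAt_id t).const_sub T
  have h2 : HasDerivAt (fun x : ℝ => x ^ q) (q * (T - t) ^ (q - 1)) (T - t) :=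
    Real.hasDerivAt_rpow_const (Or.inl (ne_of_gt (sub_pos.2 ht)))
  have h3 := (h2.comp t h1).const_mul c
  have h4 := h3.fun_neg
  exact h4.congr_deriv (by ring)

lemma hasDerivAt_quadform (G : ℝ → Matrix (Fin k) (Fin k) ℝ) (G' : Matrix (Fin k) (Fin k) ℝ)
    (v : Fin k → ℝ) (t : ℝ) (h : ∀ i j, HasDerivAt (fun s => G s i j) (G' i j) t) :
    HasDerivAt (fun s => v ⬝ᵥ (G s).mulVec v) (v ⬝ᵥ G'.mulVec v) t := by
  have key : HasDerivAt (fun s => ∑ i, ∑ j, v i * (G s i j * v j))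
      (∑ i, ∑ j, v i * (G' i j * v j)) t :=
    HasDerivAt.fun_sum fun i _ => HasDerivAt.fun_sum fun j _ => ((h i j).mul_const (v j)).const_mul (v i)
  have e : (fun s => v ⬝ᵥ (G s).mulVec v) = fun s => ∑ i, ∑ j, v i * (G s i j * v j) :=
    funext fun s => by simp [dotProduct, Matrix.mulVec, Finset.mul_sum]
  have e2 : v ⬝ᵥ G'.mulVec v = ∑ i, ∑ j, v i * (G' i j * v j) := by
    simp [dotProduct, Matrix.mulVec, Finset.mul_sum]
  rw [e, e2]
  exact key

lemma hasDerivAt_conj_entry (P : Matrix (Fin k) (Fin k) ℝ)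
    (G : ℝ → Matrix (Fin k) (Fin k) ℝ) (G' : Matrix (Fin k) (Fin k) ℝ) (i j : Fin k) (t : ℝ)
    (h : ∀ a b, HasDerivAt (fun s => G s a b) (G' a b) t) :
    HasDerivAt (fun s => (P * G s * P) i j) ((P * G' * P) i j) t := by
  have key : HasDerivAt (fun s => ∑ b, (∑ a, P i a * G s a b) * P b j)
      (∑ b, (∑ a, P i a * G' a b) * P b j) t :=
    HasDerivAt.fun_sum fun b _ =>
      (HasDerivAt.fun_sum fun a _ => (h a b).const_mul (P i a)).mul_const (P b j)
  have e : (fun s => (P * G s * P) i j) = fun s => ∑ b, (∑ a, P i a * G s a b) * P b j :=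
    funext fun s => by simp [Matrix.mul_apply]
  have e2 : (P * G' * P) i j = ∑ b, (∑ a, P i a * G' a b) * P b j := by
    simp [Matrix.mul_apply]
  rw [e, e2]
  exact key


end D
end TypeIAux

namespace TypeIAux

lemma rpow_add_le_add_rpow_real (a b q : ℝ) (ha : 0 ≤ a) (hb : 0 ≤ b)
    (hq0 : 0 ≤ q) (hq1 : q ≤ 1) : (a + b) ^ q ≤ a ^ q + b ^ q := by
  have h := NNReal.rpow_add_le_add_rpow a.toNNReal b.toNNReal hq0 hq1
  have hcoe : ∀ x : ℝ, 0 ≤ x → ((x.toNNReal : ℝ)) = x := fun x hx => Real.coe_toNNReal x hx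
  calc (a + b) ^ q = (((a.toNNReal + b.toNNReal : NNReal) : ℝ)) ^ q := by
        rw [NNReal.coe_add, hcoe a ha, hcoe b hb]
    _ = (((a.toNNReal + b.toNNReal) ^ q : NNReal) : ℝ) := (NNReal.coe_rpow _ _).symm
    _ ≤ ((a.toNNReal ^ q + b.toNNReal ^ q : NNReal) : ℝ) := NNReal.coe_le_coe.2 h
    _ = a ^ q + b ^ q := by
        rw [NNReal.coe_add, NNReal.coe_rpow, NNReal.coe_rpow, hcoe a ha, hcoe b hb]

end TypeIAux

/-- If the metrics `g(t)`, `t ∈ [0,T)`, on a compact manifold satisfy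
`|∂g/∂t|_{g(t)} ≤ 2C (T-t)^{-1/p}` for some `p ∈ (1,2]`, then they are uniformly
equivalent, and `|g(t₁) - g(t₀)|_{g(0)} ≤ C'((T-t₀)^{1-1/p} - (T-t₁)^{1-1/p})` for some
constant `C'`; in particular `t ↦ g(t)` is uniformly continuous on `[0,T)` in the
`g(0)`-norm. -/
theorem metric_uniformly_continuous_of_typeI_bound {k : ℕ} {M : Type*}
    [TopologicalSpace M] [CompactSpace M] (T : ℝ) (hT : 0 < T) (p : ℝ)
    (hp1 : 1 < p) (hp2 : p ≤ 2) (C : ℝ) (hC : 0 ≤ C)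
    (g g' : ℝ → M → Matrix (Fin k) (Fin k) ℝ)
    (hsymm : ∀ t ∈ Set.Ico (0:ℝ) T, ∀ x, (g t x).IsSymm)
    (hpd : ∀ t ∈ Set.Ico (0:ℝ) T, ∀ x, (g t x).PosDef)
    (hderiv : ∀ (x : M) (i j : Fin k), ∀ t ∈ Set.Ico (0:ℝ) T,
      HasDerivAt (fun s => g s x i j) (g' t x i j) t)
    (hbound : ∀ t ∈ Set.Ico (0:ℝ) T, ∀ x,
      tensorNorm (g t x) (g' t x) ≤ 2 * C * (T - t) ^ (-(1 / p))) :
    (∃ K : ℝ, 1 ≤ K ∧ ∀ t ∈ Set.Ico (0:ℝ) T, ∀ (x : M) (v : Fin k → ℝ),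
        K⁻¹ * (v ⬝ᵥ (g 0 x).mulVec v) ≤ v ⬝ᵥ (g t x).mulVec v ∧
        v ⬝ᵥ (g t x).mulVec v ≤ K * (v ⬝ᵥ (g 0 x).mulVec v)) ∧
    (∃ C' : ℝ, 0 ≤ C' ∧ ∀ t₀ t₁ : ℝ, 0 ≤ t₀ → t₀ ≤ t₁ → t₁ < T → ∀ x : M,
        tensorNorm (g 0 x) (g t₁ x - g t₀ x) ≤
          C' * ((T - t₀) ^ (1 - 1 / p) - (T - t₁) ^ (1 - 1 / p))) ∧
    (∀ ε > (0:ℝ), ∃ δ > (0:ℝ), ∀ t₀ ∈ Set.Ico (0:ℝ) T, ∀ t₁ ∈ Set.Ico (0:ℝ) T,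
      t₀ ≤ t₁ → t₁ - t₀ ≤ δ → ∀ x : M,
        tensorNorm (g 0 x) (g t₁ x - g t₀ x) ≤ ε) := by
  classical
  have hp0 : 0 < p := lt_trans one_pos hp1
  have hip0 : 0 < 1 / p := by positivity
  have hip1 : 1 / p < 1 := by rw [div_lt_one hp0]; exact hp1
  set q : ℝ := 1 - 1 / p with hq
  have hq0 : 0 < q := by rw [hq]; linarith
  have hq1 : q ≤ 1 := by rw [hq]; linarith
  have hqm1 : q - 1 = -(1 / p) := by rw [hq]; ring
  set c : ℝ := 2 * C * p / (p - 1) with hc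
  have hc0 : 0 ≤ c := div_nonneg (by positivity) (by linarith)
  have hcq : c * q = 2 * C := by
    rw [hq, hc]
    have hp1' : p - 1 ≠ 0 := by linarith
    have hp0' : p ≠ 0 := ne_of_gt hp0
    field_simp
  set L : ℝ := c * T ^ q with hL
  have hL0 : 0 ≤ L := mul_nonneg hc0 (Real.rpow_nonneg (le_of_lt hT) q)
  set K : ℝ := Real.exp L with hK
  have hK1 : 1 ≤ K := Real.one_le_exp hL0
  have hKpos : 0 < K := Real.exp_pos L
  have hK0 : 0 ≤ K := le_of_lt hKpos
  have h0T : (0:ℝ) ∈ Set.Ico (0:ℝ) T := ⟨le_refl 0, hT⟩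
  -- symmetry of g'
  have hsymm' : ∀ t ∈ Set.Ico (0:ℝ) T, ∀ x, (g' t x).IsSymm := by
    intro t ht x
    rw [Matrix.IsSymm]
    ext i j
    rw [Matrix.transpose_apply]
    have h1 := (hderiv x j i t ht).hasDerivWithinAt (s := Set.Ico (0:ℝ) T)
    have h2 := (hderiv x i j t ht).hasDerivWithinAt (s := Set.Ico (0:ℝ) T)
    have h2' : HasDerivWithinAt (fun s => g s x j i) (g' t x i j) (Set.Ico (0:ℝ) T) t := by
      apply h2.congr
      · intro y hy
        have := congrFun (congrFun (hsymm y hy x) i) j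
        rw [Matrix.transpose_apply] at this
        exact this
      · have := congrFun (congrFun (hsymm t ht x) i) j
        rw [Matrix.transpose_apply] at this
        exact this
    have hu := (uniqueDiffOn_Ico 0 T) t ht
    exact (h1.derivWithin hu).symm.trans (h2'.derivWithin hu)
  -- positivity of quadratic forms
  have hQpos : ∀ t ∈ Set.Ico (0:ℝ) T, ∀ (x : M) (v : Fin k → ℝ), v ≠ 0 →
      0 < v ⬝ᵥ (g t x).mulVec v := by
    intro t ht x v hv
    have := (hpd t ht x).dotProduct_mulVec_pos hv
    simpa using this
  -- derivative of the antiderivative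
  have hFd : ∀ (m t : ℝ), t < T →
      HasDerivAt (fun s => -((m * c) * (T - s) ^ q))
        (m * (2 * C * (T - t) ^ (-(1 / p)))) t := by
    intro m t ht
    have h := TypeIAux.hasDerivAt_antideriv (m * c) q T t ht
    have he : (m * c) * q * (T - t) ^ (q - 1) = m * (2 * C * (T - t) ^ (-(1 / p))) := by
      rw [hqm1, mul_assoc m c q, hcq]
      ring
    rw [← he]
    exact h
  -- Part 1
  have main1 : ∀ t ∈ Set.Ico (0:ℝ) T, ∀ (x : M) (v : Fin k → ℝ),
      K⁻¹ * (v ⬝ᵥ (g 0 x).mulVec v) ≤ v ⬝ᵥ (g t x).mulVec v ∧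
      v ⬝ᵥ (g t x).mulVec v ≤ K * (v ⬝ᵥ (g 0 x).mulVec v) := by
    intro t ht x v
    by_cases hv : v = 0
    · subst hv
      simp [zero_dotProduct]
    · have hsub : Set.Icc (0:ℝ) t ⊆ Set.Ico (0:ℝ) T :=
        fun s hs => ⟨hs.1, lt_of_le_of_lt hs.2 ht.2⟩
      have hfpos : ∀ s ∈ Set.Icc (0:ℝ) t, 0 < v ⬝ᵥ (g s x).mulVec v :=
        fun s hs => hQpos s (hsub hs) x v hv
      have hud : ∀ s ∈ Set.Icc (0:ℝ) t,
          HasDerivAt (fun r => Real.log (v ⬝ᵥ (g r x).mulVec v))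
            ((v ⬝ᵥ (g' s x).mulVec v) / (v ⬝ᵥ (g s x).mulVec v)) s := by
        intro s hs
        exact (TypeIAux.hasDerivAt_quadform (fun r => g r x) (g' s x) v s
          (fun i j => hderiv x i j s (hsub hs))).log (ne_of_gt (hfpos s hs))
      have hub : ∀ s ∈ Set.Icc (0:ℝ) t,
          |(v ⬝ᵥ (g' s x).mulVec v) / (v ⬝ᵥ (g s x).mulVec v)| ≤
            1 * (2 * C * (T - s) ^ (-(1 / p))) := by
        intro s hs
        obtain ⟨S, hSg, hSt, hdet⟩ := TypeIAux.exists_sqrt (hpd s (hsub hs) x)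
        have habs : |v ⬝ᵥ (g' s x).mulVec v| ≤
            tensorNorm (g s x) (g' s x) * (v ⬝ᵥ (g s x).mulVec v) :=
          TypeIAux.abs_quad_le hSg hSt hdet (g' s x) (hsymm' s (hsub hs) x) v
        rw [abs_div, abs_of_pos (hfpos s hs), div_le_iff₀ (hfpos s hs), one_mul]
        calc |v ⬝ᵥ (g' s x).mulVec v|
            ≤ tensorNorm (g s x) (g' s x) * (v ⬝ᵥ (g s x).mulVec v) := habs
          _ ≤ (2 * C * (T - s) ^ (-(1 / p))) * (v ⬝ᵥ (g s x).mulVec v) :=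
              mul_le_mul_of_nonneg_right (hbound s (hsub hs) x) (le_of_lt (hfpos s hs))
      have key : |Real.log (v ⬝ᵥ (g t x).mulVec v) - Real.log (v ⬝ᵥ (g 0 x).mulVec v)| ≤
          -((1 * c) * (T - t) ^ q) - -((1 * c) * (T - 0) ^ q) :=
        TypeIAux.abs_sub_le_of_hasDerivAt 0 t ht.1
          (fun r => Real.log (v ⬝ᵥ (g r x).mulVec v))
          (fun s => (v ⬝ᵥ (g' s x).mulVec v) / (v ⬝ᵥ (g s x).mulVec v))
          (fun s => -((1 * c) * (T - s) ^ q))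
          (fun s => 1 * (2 * C * (T - s) ^ (-(1 / p))))
          hud (fun s hs => hFd 1 s (lt_of_le_of_lt hs.2 ht.2)) hub
      have hFtF0 : -((1 * c) * (T - t) ^ q) - -((1 * c) * (T - 0) ^ q) ≤ L := by
        have h1 : 0 ≤ (T - t) ^ q := Real.rpow_nonneg (by linarith [ht.2]) q
        have h2 : 0 ≤ c * (T - t) ^ q := mul_nonneg hc0 h1
        rw [hL, sub_zero]
        nlinarith
      have habs2 := abs_le.1 key
      have hpos0 : 0 < v ⬝ᵥ (g 0 x).mulVec v := hfpos 0 ⟨le_refl 0, ht.1⟩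
      have hpost : 0 < v ⬝ᵥ (g t x).mulVec v := hfpos t ⟨ht.1, le_refl t⟩
      constructor
      · have h1 : Real.log (v ⬝ᵥ (g 0 x).mulVec v) ≤ L + Real.log (v ⬝ᵥ (g t x).mulVec v) := by
          linarith [habs2.1, hFtF0]
        have h2 := Real.exp_le_exp.2 h1
        rw [Real.exp_add, Real.exp_log hpos0, Real.exp_log hpost] at h2
        rw [inv_mul_le_iff₀ hKpos]
        exact h2
      · have h1 : Real.log (v ⬝ᵥ (g t x).mulVec v) ≤ L + Real.log (v ⬝ᵥ (g 0 x).mulVec v) := by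
          linarith [habs2.2, hFtF0]
        have h2 := Real.exp_le_exp.2 h1
        rwa [Real.exp_add, Real.exp_log hpos0, Real.exp_log hpost] at h2
  -- Part 2
  have hC'0 : 0 ≤ (k:ℝ)^2 * (((k:ℝ) * K) * c) := by positivity
  have main2 : ∀ t₀ t₁ : ℝ, 0 ≤ t₀ → t₀ ≤ t₁ → t₁ < T → ∀ x : M,
      tensorNorm (g 0 x) (g t₁ x - g t₀ x) ≤
        ((k:ℝ)^2 * (((k:ℝ) * K) * c)) * ((T - t₀) ^ q - (T - t₁) ^ q) := by
    intro t₀ t₁ ht₀ ht01 ht₁ x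
    have hsub : Set.Icc t₀ t₁ ⊆ Set.Ico (0:ℝ) T :=
      fun s hs => ⟨le_trans ht₀ hs.1, lt_of_le_of_lt hs.2 ht₁⟩
    obtain ⟨S₀, hS₀g, hS₀t, hS₀det⟩ := TypeIAux.exists_sqrt (hpd 0 h0T x)
    have hm0 : 0 ≤ (k:ℝ) * K := mul_nonneg (Nat.cast_nonneg k) hK0
    have entry : ∀ i j : Fin k, |(S₀⁻¹ * (g t₁ x - g t₀ x) * S₀⁻¹) i j| ≤
        (((k:ℝ) * K) * c) * ((T - t₀) ^ q - (T - t₁) ^ q) := by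
      intro i j
      have hud : ∀ s ∈ Set.Icc t₀ t₁,
          HasDerivAt (fun r => (S₀⁻¹ * g r x * S₀⁻¹) i j) ((S₀⁻¹ * g' s x * S₀⁻¹) i j) s :=
        fun s hs => TypeIAux.hasDerivAt_conj_entry S₀⁻¹ (fun r => g r x) (g' s x) i j s
          (fun a b => hderiv x a b s (hsub hs))
      have hub : ∀ s ∈ Set.Icc t₀ t₁, |(S₀⁻¹ * g' s x * S₀⁻¹) i j| ≤
          ((k:ℝ) * K) * (2 * C * (T - s) ^ (-(1 / p))) := by
        intro s hs
        obtain ⟨S, hSg, hSt, hdet⟩ := TypeIAux.exists_sqrt (hpd s (hsub hs) x)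
        have h1 : |(S₀⁻¹ * g' s x * S₀⁻¹) i j| ≤
            Real.sqrt (TypeIAux.froSq (S₀⁻¹ * g' s x * S₀⁻¹)) := by
          rw [← Real.sqrt_sq_eq_abs]
          exact Real.sqrt_le_sqrt (TypeIAux.sq_entry_le_froSq _ i j)
        have h2 : Real.sqrt (TypeIAux.froSq (S₀⁻¹ * g' s x * S₀⁻¹)) =
            tensorNorm (g 0 x) (g' s x) :=
          (TypeIAux.tensorNorm_eq hS₀g hS₀t hS₀det (g' s x) (hsymm' s (hsub hs) x)).symm
        have h3 : tensorNorm (g 0 x) (g' s x) ≤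
            ((k:ℝ) * K) * tensorNorm (g s x) (g' s x) :=
          TypeIAux.tensorNorm_comparison hSg hSt hdet hS₀g hS₀t hS₀det K hK0
            (fun v => (main1 s (hsub hs) x v).2) (g' s x) (hsymm' s (hsub hs) x)
        calc |(S₀⁻¹ * g' s x * S₀⁻¹) i j|
            ≤ tensorNorm (g 0 x) (g' s x) := h2 ▸ h1
          _ ≤ ((k:ℝ) * K) * tensorNorm (g s x) (g' s x) := h3
          _ ≤ ((k:ℝ) * K) * (2 * C * (T - s) ^ (-(1 / p))) :=
              mul_le_mul_of_nonneg_left (hbound s (hsub hs) x) hm0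
      have key : |(S₀⁻¹ * g t₁ x * S₀⁻¹) i j - (S₀⁻¹ * g t₀ x * S₀⁻¹) i j| ≤
          -((((k:ℝ) * K) * c) * (T - t₁) ^ q) - -((((k:ℝ) * K) * c) * (T - t₀) ^ q) :=
        TypeIAux.abs_sub_le_of_hasDerivAt t₀ t₁ ht01
          (fun r => (S₀⁻¹ * g r x * S₀⁻¹) i j)
          (fun s => (S₀⁻¹ * g' s x * S₀⁻¹) i j)
          (fun s => -((((k:ℝ) * K) * c) * (T - s) ^ q))
          (fun s => ((k:ℝ) * K) * (2 * C * (T - s) ^ (-(1 / p))))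
          hud (fun s hs => hFd ((k:ℝ) * K) s (lt_of_le_of_lt hs.2 ht₁)) hub
      have ediff : (S₀⁻¹ * (g t₁ x - g t₀ x) * S₀⁻¹) i j =
          (S₀⁻¹ * g t₁ x * S₀⁻¹) i j - (S₀⁻¹ * g t₀ x * S₀⁻¹) i j := by
        rw [Matrix.mul_sub, Matrix.sub_mul, Matrix.sub_apply]
      rw [ediff]
      calc |(S₀⁻¹ * g t₁ x * S₀⁻¹) i j - (S₀⁻¹ * g t₀ x * S₀⁻¹) i j|
          ≤ -((((k:ℝ) * K) * c) * (T - t₁) ^ q) - -((((k:ℝ) * K) * c) * (T - t₀) ^ q) := key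
        _ = (((k:ℝ) * K) * c) * ((T - t₀) ^ q - (T - t₁) ^ q) := by ring
    have hΔsymm : (g t₁ x - g t₀ x).IsSymm := by
      have h1 := hsymm t₁ ⟨le_trans ht₀ ht01, ht₁⟩ x
      have h0 := hsymm t₀ ⟨ht₀, lt_of_le_of_lt ht01 ht₁⟩ x
      rw [Matrix.IsSymm, Matrix.transpose_sub, h1, h0]
    rw [TypeIAux.tensorNorm_eq hS₀g hS₀t hS₀det _ hΔsymm]
    calc Real.sqrt (TypeIAux.froSq (S₀⁻¹ * (g t₁ x - g t₀ x) * S₀⁻¹))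
        ≤ ∑ i, ∑ j, |(S₀⁻¹ * (g t₁ x - g t₀ x) * S₀⁻¹) i j| :=
          TypeIAux.sqrt_froSq_le_sum_abs _
      _ ≤ ∑ _i : Fin k, ∑ _j : Fin k, (((k:ℝ) * K) * c) * ((T - t₀) ^ q - (T - t₁) ^ q) :=
          Finset.sum_le_sum fun i _ => Finset.sum_le_sum fun j _ => entry i j
      _ = ((k:ℝ)^2 * (((k:ℝ) * K) * c)) * ((T - t₀) ^ q - (T - t₁) ^ q) := by
          simp [Finset.sum_const, Finset.card_univ]
          ring
  refine ⟨⟨K, hK1, main1⟩, ⟨(k:ℝ)^2 * (((k:ℝ) * K) * c), hC'0, main2⟩, ?_⟩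
  -- Part 3
  intro ε hε
  set C' : ℝ := (k:ℝ)^2 * (((k:ℝ) * K) * c) with hC'
  have hD : 0 < C' + 1 := by linarith
  refine ⟨(ε / (C' + 1)) ^ q⁻¹, Real.rpow_pos_of_pos (div_pos hε hD) _, ?_⟩
  intro t₀ ht₀m t₁ ht₁m h01 hdle x
  have h2 := main2 t₀ t₁ ht₀m.1 h01 ht₁m.2 x
  have hdt : 0 ≤ t₁ - t₀ := sub_nonneg.2 h01
  have hsub1 : (T - t₀) ^ q - (T - t₁) ^ q ≤ (t₁ - t₀) ^ q := by
    have hTt1 : 0 ≤ T - t₁ := le_of_lt (sub_pos.2 ht₁m.2)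
    have h := TypeIAux.rpow_add_le_add_rpow_real (T - t₁) (t₁ - t₀) q hTt1 hdt
      (le_of_lt hq0) hq1
    have hsplit : T - t₀ = (T - t₁) + (t₁ - t₀) := by ring
    rw [hsplit]
    linarith
  have hmono : (t₁ - t₀) ^ q ≤ ((ε / (C' + 1)) ^ q⁻¹) ^ q :=
    Real.rpow_le_rpow hdt hdle (le_of_lt hq0)
  have heq : ((ε / (C' + 1)) ^ q⁻¹) ^ q = ε / (C' + 1) := by
    rw [← Real.rpow_mul (le_of_lt (div_pos hε hD)), inv_mul_cancel₀ (ne_of_gt hq0),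
      Real.rpow_one]
  have hfin : (T - t₀) ^ q - (T - t₁) ^ q ≤ ε / (C' + 1) := by
    rw [← heq]
    exact le_trans hsub1 hmono
  calc tensorNorm (g 0 x) (g t₁ x - g t₀ x)
      ≤ C' * ((T - t₀) ^ q - (T - t₁) ^ q) := h2
    _ ≤ C' * (ε / (C' + 1)) := mul_le_mul_of_nonneg_left hfin (hC' ▸ hC'0)
    _ ≤ (C' + 1) * (ε / (C' + 1)) :=
        mul_le_mul_of_nonneg_right (by linarith) (le_of_lt (div_pos hε hD))
    _ = ε := by field_simp
end
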